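/- For every integer N ≥ 1, the ratio of MRC to SC coding gains r(N) = (2^{2 − 2/N}/N)·(N!)^{2/N} satisfies r(1) = 1 and r(N) is strictly greater than 1 for all N ≥ 2. -/

import Mathlib

open Real

noncomputable def mrcScRatio (N : ℕ) : ℝ :=
  (2 : ℝ) ^ ((2 : ℝ) - 2 / N) / N * ((Nat.factorial N : ℝ)) ^ ((2 : ℝ) / N)

lemma pow_self_le_sq_factorial (N : ℕ) : N ^ N ≤ (Nat.factorial N) ^ 2 := by
  have h1 : Nat.factorial N = ∏ k ∈ Finset.range N, (k + 1) :=
    (Finset.prod_range_add_one_eq_factorial N).symm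
  have h2 : Nat.factorial N = ∏ k ∈ Finset.range N, (N - k) := by
    rw [h1]
    rw [← Finset.prod_range_reflect (fun k => k + 1) N]
    apply Finset.prod_congr rfl
    intro k hk
    simp at hk
    omega
  have h3 : (Nat.factorial N) ^ 2 = ∏ k ∈ Finset.range N, (k + 1) * (N - k) := by
    have : (Nat.factorial N) ^ 2 =
        (∏ k ∈ Finset.range N, (k + 1)) * ∏ k ∈ Finset.range N, (N - k) := by
      rw [← h1, ← h2, sq]
    rw [this, ← Finset.prod_mul_distrib]
  rw [h3]
  calc N ^ N = ∏ _k ∈ Finset.range N, N := by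
        rw [Finset.prod_const, Finset.card_range]
    _ ≤ ∏ k ∈ Finset.range N, (k + 1) * (N - k) := by
        apply Finset.prod_le_prod'
        intro k hk
        simp at hk
        have hd : 1 ≤ N - k := by omega
        have : N = k + (N - k) := by omega
        nlinarith [Nat.sub_le N k]

/-- r(1) = 1 and r(N) > 1 for all N ≥ 2. -/
theorem mrcScRatio_props :
    mrcScRatio 1 = 1 ∧ ∀ N : ℕ, 2 ≤ N → 1 < mrcScRatio N := by
  constructor
  · simp [mrcScRatio, Nat.factorial]
  · intro N hN
    have hN0 : (0 : ℝ) < N := by positivity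
    have hNne : (N : ℝ) ≠ 0 := ne_of_gt hN0
    set a : ℝ := (2 : ℝ) ^ ((2 : ℝ) - 2 / N) * ((Nat.factorial N : ℝ)) ^ ((2 : ℝ) / N)
      with ha_def
    have hfac0 : (0 : ℝ) ≤ (Nat.factorial N : ℝ) := by positivity
    have ha_nonneg : 0 ≤ a := by positivity
    -- key: a ^ N = 2 ^ (2N - 2) * (N!)^2
    have hpow : a ^ N = (2 : ℝ) ^ (2 * N - 2 : ℕ) * ((Nat.factorial N : ℝ)) ^ 2 := by
      rw [ha_def, mul_pow]
      rw [← Real.rpow_natCast ((2:ℝ) ^ ((2:ℝ) - 2 / N)) N,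
          ← Real.rpow_natCast (((Nat.factorial N : ℝ)) ^ ((2:ℝ) / N)) N]
      rw [← Real.rpow_mul (by norm_num : (0:ℝ) ≤ 2),
          ← Real.rpow_mul hfac0]
      have e1 : ((2 : ℝ) - 2 / N) * N = ((2 * N - 2 : ℕ) : ℝ) := by
        have : ((2 * N - 2 : ℕ) : ℝ) = 2 * (N : ℝ) - 2 := by
          push_cast [Nat.cast_sub (by omega : 2 ≤ 2 * N)]
          ring
        rw [this]
        field_simp
      have e2 : (2 : ℝ) / N * N = ((2 : ℕ) : ℝ) := by
        field_simp
        norm_num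
      rw [e1, e2, Real.rpow_natCast, Real.rpow_natCast]
    -- natural number inequality
    have hnat : N ^ N < 2 ^ (2 * N - 2 : ℕ) * (Nat.factorial N) ^ 2 := by
      have h1 : N ^ N ≤ (Nat.factorial N) ^ 2 := pow_self_le_sq_factorial N
      have h2 : 1 < 2 ^ (2 * N - 2 : ℕ) := by
        apply Nat.one_lt_two_pow_iff.mpr
        omega
      have h3 : 0 < (Nat.factorial N) ^ 2 := by positivity
      calc N ^ N ≤ (Nat.factorial N) ^ 2 := h1
        _ = 1 * (Nat.factorial N) ^ 2 := (one_mul _).symm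
        _ < 2 ^ (2 * N - 2 : ℕ) * (Nat.factorial N) ^ 2 := by
            exact (Nat.mul_lt_mul_right h3).mpr h2
    have hlt : (N : ℝ) ^ N < a ^ N := by
      rw [hpow]
      exact_mod_cast hnat
    have hNa : (N : ℝ) < a := by
      refine lt_of_pow_lt_pow_left₀ N ha_nonneg hlt
    have : mrcScRatio N = a / N := by
      rw [mrcScRatio, ha_def]
      ring
    rw [this]
    exact (one_lt_div hN0).mpr hNa
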